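/- Consistency of the scattering of two transversal initial walls (pentagon identity): any ℂ[[a,b]]-algebra endomorphisms A_1, A_2, A_{12} of B that are continuous for the (a,b)-adic topology and satisfy A_1(x) = x, A_1(y) = (1+ax)y; A_2(x) = (1+by)^{-1}x, A_2(y) = y; A_{12}(x) = (1+abxy)^{-1}x, A_{12}(y) = (1+abxy)y, satisfy the composition identity A_1 ∘ A_2 = A_2 ∘ A_{12} ∘ A_1. In particular, the composition of the wall-crossing transformations around the intersection point of two walls whose primitive direction vectors have determinant ±1 becomes the identity after inserting the single new wall in the sum direction with wall-crossing function 1+abxy. -/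

import Mathlib

set_option maxHeartbeats 1000000
set_option synthInstance.maxHeartbeats 400000


/- STATEMENT 12: Consistency of the scattering of two transversal initial walls
(pentagon identity): for ℂ[[a,b]]-algebra endomorphisms A₁, A₂, A₁₂ of
B = ℂ[x^{±1},y^{±1}][[a,b]], continuous for the (a,b)-adic topology, with
A₁(x) = x, A₁(y) = (1+ax)y; A₂(x) = (1+by)⁻¹x, A₂(y) = y;
A₁₂(x) = (1+abxy)⁻¹x, A₁₂(y) = (1+abxy)y, one has A₁ ∘ A₂ = A₂ ∘ A₁₂ ∘ A₁. -/

noncomputable section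

/-- `P = ℂ[x^{±1}, y^{±1}]`, the Laurent polynomial ring in two variables over `ℂ`,
realized as the monoid algebra of `ℤ²`. -/
abbrev Pw : Type := AddMonoidAlgebra ℂ (ℤ × ℤ)

/-- `B = P[[a,b]]`, formal power series in two further variables `a, b` over `P`. -/
abbrev Bw : Type := MvPowerSeries (Fin 2) Pw

/-- `x ∈ B`. -/
def xB : Bw := (MvPowerSeries.C : Pw →+* MvPowerSeries (Fin 2) Pw) (AddMonoidAlgebra.single (1, 0) 1)

/-- `y ∈ B`. -/
def yB : Bw := (MvPowerSeries.C : Pw →+* MvPowerSeries (Fin 2) Pw) (AddMonoidAlgebra.single (0, 1) 1)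

/-- `a ∈ B`. -/
def aB : Bw := MvPowerSeries.X 0

/-- `b ∈ B`. -/
def bB : Bw := MvPowerSeries.X 1

/-- `ℂ[[a,b]]`. -/
abbrev Sw : Type := MvPowerSeries (Fin 2) ℂ

/-- The `(a,b)`-adic topology on `B`, i.e. the topology of the ideal `(a, b) ⊆ B`. -/
def adicTopBw : TopologicalSpace Bw := (Ideal.span {aB, bB}).adicTopology

/-- `(1+ax)⁻¹ ∈ B` (the constant term of `1+ax` is `1`, a unit). -/
def invAX : Bw := MvPowerSeries.invOfUnit (1 + aB * xB) 1

/-- `(1+by)⁻¹ ∈ B`. -/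
def invBY : Bw := MvPowerSeries.invOfUnit (1 + bB * yB) 1

/-- `(1+abxy)⁻¹ ∈ B`. -/
def invABXY : Bw := MvPowerSeries.invOfUnit (1 + aB * bB * xB * yB) 1

namespace PentagonAux

open MvPowerSeries

def Jw : Ideal Bw := Ideal.span {aB, bB}

/-- The ideal of power series whose coefficients in total degree `< n` vanish. -/
def lowI (n : ℕ) : Ideal Bw where
  carrier := {f | ∀ m : Fin 2 →₀ ℕ, m 0 + m 1 < n → MvPowerSeries.coeff (R := Pw) m f = 0}
  add_mem' := by
    intro f g hf hg m hm
    rw [map_add, hf m hm, hg m hm, add_zero]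
  zero_mem' := by
    intro m hm; simp
  smul_mem' := by
    intro c f hf m hm
    rw [smul_eq_mul, MvPowerSeries.coeff_mul]
    apply Finset.sum_eq_zero
    intro pq hpq
    rw [Finset.HasAntidiagonal.mem_antidiagonal] at hpq
    have h0 : pq.2 0 ≤ m 0 := by rw [← hpq, Finsupp.add_apply]; exact le_add_self
    have h1 : pq.2 1 ≤ m 1 := by rw [← hpq, Finsupp.add_apply]; exact le_add_self
    exact mul_eq_zero_of_right _ (hf pq.2 (by omega))

lemma mem_lowI {n : ℕ} {f : Bw} :
    f ∈ lowI n ↔ ∀ m : Fin 2 →₀ ℕ, m 0 + m 1 < n → MvPowerSeries.coeff (R := Pw) m f = 0 :=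
  Iff.rfl

lemma mul_mem_lowI {i j : ℕ} {f g : Bw} (hf : f ∈ lowI i) (hg : g ∈ lowI j) :
    f * g ∈ lowI (i + j) := by
  refine mem_lowI.2 fun m hm => ?_
  rw [MvPowerSeries.coeff_mul]
  apply Finset.sum_eq_zero
  intro pq hpq
  rw [Finset.HasAntidiagonal.mem_antidiagonal] at hpq
  have hsum : pq.1 0 + pq.2 0 + (pq.1 1 + pq.2 1) < i + j := by
    rw [← Finsupp.add_apply, ← Finsupp.add_apply, hpq]; omega
  rcases lt_or_ge (pq.1 0 + pq.1 1) i with h | h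
  · exact mul_eq_zero_of_left (hf pq.1 h) _
  · exact mul_eq_zero_of_right _ (hg pq.2 (by omega))

lemma Jw_le_lowI : Jw ≤ lowI 1 := by
  rw [Jw, Ideal.span_le]
  rintro f (rfl | rfl) <;>
  · refine mem_lowI.2 fun m hm => ?_
    have h0 : m 0 = 0 := by omega
    have h1 : m 1 = 0 := by omega
    have hm0 : m = 0 := by
      ext i; fin_cases i
      · simpa using h0
      · simpa using h1
    subst hm0
    exact MvPowerSeries.coeff_zero_X _

lemma pow_le_lowI : ∀ n : ℕ, Jw ^ n ≤ lowI n := by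
  intro n
  induction n with
  | zero => intro f _; exact mem_lowI.2 fun m hm => by omega
  | succ n ih =>
    rw [pow_succ]
    refine Ideal.mul_le.2 fun r hr s hs => ?_
    exact mul_mem_lowI (ih hr) (Jw_le_lowI hs)

lemma aB_mem_Jw : aB ∈ Jw := Ideal.subset_span (by simp)
lemma bB_mem_Jw : bB ∈ Jw := Ideal.subset_span (by simp)

lemma lowI_le_pow : ∀ n : ℕ, lowI n ≤ Jw ^ n := by
  intro n
  induction n with
  | zero => rw [pow_zero, Ideal.one_eq_top]; exact le_top
  | succ n ih =>
    intro f hf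
    set g : Bw := fun m => f (m + Finsupp.single 0 1) with hgdef
    set h : Bw := fun m => if m 0 = 0 then f (m + Finsupp.single 1 1) else 0 with hhdef
    have hg : g ∈ lowI n := by
      refine mem_lowI.2 fun m hm => ?_
      show MvPowerSeries.coeff (R := Pw) m g = 0
      rw [show MvPowerSeries.coeff (R := Pw) m g = f (m + Finsupp.single 0 1) from rfl]
      apply hf
      simp only [Finsupp.add_apply, Finsupp.single_apply]
      norm_num
      omega
    have hcoeff_h : ∀ p : Fin 2 →₀ ℕ,
        MvPowerSeries.coeff (R := Pw) p h = if p 0 = 0 then f (p + Finsupp.single 1 1) else 0 :=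
      fun _ => rfl
    have hcoeff_g : ∀ p : Fin 2 →₀ ℕ,
        MvPowerSeries.coeff (R := Pw) p g = f (p + Finsupp.single 0 1) := fun _ => rfl
    have hh : h ∈ lowI n := by
      refine mem_lowI.2 fun m hm => ?_
      rw [hcoeff_h]
      split
      · apply hf
        simp only [Finsupp.add_apply, Finsupp.single_apply]
        norm_num
        omega
      · rfl
    have key : f = g * aB + h * bB := by
      ext m
      rw [map_add]
      rw [show aB = MvPowerSeries.monomial (R := Pw) (Finsupp.single 0 1) (1 : Pw) from rfl]
      rw [show bB = MvPowerSeries.monomial (R := Pw) (Finsupp.single 1 1) (1 : Pw) from rfl]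
      rw [MvPowerSeries.coeff_mul_monomial, MvPowerSeries.coeff_mul_monomial]
      simp only [Finsupp.single_le_iff, mul_one]
      by_cases h0 : (1 : ℕ) ≤ m 0
      · rw [if_pos h0]
        have hm0 : (m - Finsupp.single 0 1) + Finsupp.single 0 1 = m :=
          tsub_add_cancel_of_le (Finsupp.single_le_iff.2 h0)
        have hgm : MvPowerSeries.coeff (R := Pw) (m - Finsupp.single 0 1) g = MvPowerSeries.coeff (R := Pw) m f := by
          rw [hcoeff_g, hm0]
          rfl
        rw [hgm]
        split
        · rw [hcoeff_h, if_neg, add_zero]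
          rw [Finsupp.tsub_apply, Finsupp.single_apply]
          norm_num
          omega
        · rw [add_zero]
      · rw [if_neg h0]
        by_cases h1 : (1 : ℕ) ≤ m 1
        · rw [if_pos h1]
          have hm1 : (m - Finsupp.single 1 1) + Finsupp.single 1 1 = m :=
            tsub_add_cancel_of_le (Finsupp.single_le_iff.2 h1)
          rw [hcoeff_h, if_pos, hm1, zero_add]
          · rfl
          · rw [Finsupp.tsub_apply, Finsupp.single_apply]
            norm_num
            omega
        · rw [if_neg h1]
          have e0 : m 0 = 0 := by omega
          have e1 : m 1 = 0 := by omega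
          have hm0 : m = 0 := by
            ext i; fin_cases i
            · simpa using e0
            · simpa using e1
          rw [hm0, add_zero]
          exact (hf 0 (by simp)).symm ▸ rfl
    rw [key, pow_succ]
    exact add_mem (Ideal.mul_mem_mul (ih hg) aB_mem_Jw) (Ideal.mul_mem_mul (ih hh) bB_mem_Jw)

end PentagonAux

namespace PentagonAux
open MvPowerSeries

/-- the finsupp `(i, j)` on `Fin 2`. -/
def pairF (i j : ℕ) : Fin 2 →₀ ℕ := Finsupp.single 0 i + Finsupp.single 1 j

@[simp] lemma pairF_apply0 (i j : ℕ) : pairF i j 0 = i := by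
  simp [pairF, Finsupp.add_apply, Finsupp.single_apply]

@[simp] lemma pairF_apply1 (i j : ℕ) : pairF i j 1 = j := by
  simp [pairF, Finsupp.add_apply, Finsupp.single_apply]

lemma pairF_self (m : Fin 2 →₀ ℕ) : pairF (m 0) (m 1) = m := by
  ext i
  fin_cases i
  · simp
  · simp

lemma monomial_eq_C_mul (m : Fin 2 →₀ ℕ) (c : Pw) :
    MvPowerSeries.monomial (R := Pw) m c = (MvPowerSeries.C (σ := Fin 2) (R := Pw)) c * aB ^ (m 0) * bB ^ (m 1) := by
  rw [aB, bB, MvPowerSeries.X_pow_eq, MvPowerSeries.X_pow_eq,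
    ← MvPowerSeries.monomial_zero_eq_C_apply, MvPowerSeries.monomial_mul_monomial,
    MvPowerSeries.monomial_mul_monomial, mul_one, mul_one, zero_add]
  rw [show Finsupp.single (0 : Fin 2) (m 0) + Finsupp.single 1 (m 1) = pairF (m 0) (m 1) from rfl,
    pairF_self]

/-- Truncation of a power series below total degree `n` (box truncation). -/
def trunc (n : ℕ) (f : Bw) : Bw :=
  ∑ p ∈ Finset.range n ×ˢ Finset.range n,
    MvPowerSeries.monomial (R := Pw) (pairF p.1 p.2) (MvPowerSeries.coeff (R := Pw) (pairF p.1 p.2) f)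

lemma coeff_trunc {n : ℕ} {f : Bw} {m : Fin 2 →₀ ℕ} (h0 : m 0 < n) (h1 : m 1 < n) :
    MvPowerSeries.coeff (R := Pw) m (trunc n f) = MvPowerSeries.coeff (R := Pw) m f := by
  rw [trunc, map_sum]
  rw [Finset.sum_eq_single_of_mem (m 0, m 1) (by simp [h0, h1])]
  · rw [MvPowerSeries.coeff_monomial, pairF_self, if_pos rfl]
  · intro p _ hp
    rw [MvPowerSeries.coeff_monomial, if_neg]
    intro hEq
    apply hp
    have e0 : p.1 = m 0 := by rw [← pairF_apply0 p.1 p.2, hEq]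
    have e1 : p.2 = m 1 := by rw [← pairF_apply1 p.1 p.2, hEq]
    exact Prod.ext e0 e1

lemma sub_trunc_mem (n : ℕ) (f : Bw) : f - trunc n f ∈ lowI n := by
  refine mem_lowI.2 fun m hm => ?_
  rw [map_sub, coeff_trunc (by omega) (by omega), sub_self]

end PentagonAux

namespace PentagonAux
open MvPowerSeries

section Agree

variable {φ ψ : Bw →ₐ[Sw] Bw}

lemma agree_inv {u v : Bw} (huv : u * v = 1) (hu : φ u = ψ u) : φ v = ψ v := by
  have h1 : φ u * φ v = 1 := by rw [← map_mul, huv, map_one]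
  have h2 : ψ u * ψ v = 1 := by rw [← map_mul, huv, map_one]
  calc φ v = φ v * (ψ u * ψ v) := by rw [h2, mul_one]
    _ = (φ u * φ v) * ψ v := by rw [hu]; ring
    _ = ψ v := by rw [h1, one_mul]

/-- `e w = z^w ∈ P ⊆ B`. -/
def eB (w : ℤ × ℤ) : Bw := (MvPowerSeries.C (σ := Fin 2) (R := Pw)) (AddMonoidAlgebra.single w 1)

lemma eB_mul (w w' : ℤ × ℤ) : eB w * eB w' = eB (w + w') := by
  rw [eB, eB, eB, ← map_mul, AddMonoidAlgebra.single_mul_single, one_mul]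

lemma eB_zero : eB 0 = 1 := by
  rw [eB, ← AddMonoidAlgebra.one_def, map_one]

lemma eB_nsmul (w : ℤ × ℤ) (k : ℕ) : eB w ^ k = eB (k • w) := by
  rw [eB, eB, ← map_pow, AddMonoidAlgebra.single_pow, one_pow]

lemma agree_eB (hx : φ xB = ψ xB) (hy : φ yB = ψ yB) (w : ℤ × ℤ) : φ (eB w) = ψ (eB w) := by
  have hxe : xB = eB (1, 0) := rfl
  have hye : yB = eB (0, 1) := rfl
  have hxinv : φ (eB (-1, 0)) = ψ (eB (-1, 0)) := by
    refine agree_inv ?_ hx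
    rw [hxe, eB_mul]
    norm_num
    exact eB_zero
  have hyinv : φ (eB (0, -1)) = ψ (eB (0, -1)) := by
    refine agree_inv ?_ hy
    rw [hye, eB_mul]
    norm_num
    exact eB_zero
  have hrow : ∀ p : ℤ, φ (eB (p, 0)) = ψ (eB (p, 0)) := by
    intro p
    rcases Int.eq_nat_or_neg p with ⟨k, rfl | rfl⟩
    · have : eB ((k : ℤ), 0) = eB (1, 0) ^ k := by
        rw [eB_nsmul]; congr 1; simp
      rw [this, map_pow, map_pow, ← hxe, hx]
    · have : eB (-(k : ℤ), 0) = eB (-1, 0) ^ k := by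
        rw [eB_nsmul]; congr 1; simp
      rw [this, map_pow, map_pow, hxinv]
  have hcol : ∀ q : ℤ, φ (eB (0, q)) = ψ (eB (0, q)) := by
    intro q
    rcases Int.eq_nat_or_neg q with ⟨k, rfl | rfl⟩
    · have : eB (0, (k : ℤ)) = eB (0, 1) ^ k := by
        rw [eB_nsmul]; congr 1; simp
      rw [this, map_pow, map_pow, ← hye, hy]
    · have : eB (0, -(k : ℤ)) = eB (0, -1) ^ k := by
        rw [eB_nsmul]; congr 1; simp
      rw [this, map_pow, map_pow, hyinv]
  have : eB w = eB (w.1, 0) * eB (0, w.2) := by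
    rw [eB_mul]
    norm_num
  rw [this, map_mul, map_mul, hrow, hcol]

lemma agree_C (hx : φ xB = ψ xB) (hy : φ yB = ψ yB) (c : Pw) :
    φ ((MvPowerSeries.C (σ := Fin 2) (R := Pw)) c) = ψ ((MvPowerSeries.C (σ := Fin 2) (R := Pw)) c) := by
  induction c using AddMonoidAlgebra.induction with
  | zero => rw [map_zero, map_zero, map_zero]
  | single_add w r f _ _ ih =>
    rw [map_add, map_add, map_add, ih]
    congr 1
    have hsingle : (AddMonoidAlgebra.single w r : Pw) =
        AddMonoidAlgebra.single 0 r * AddMonoidAlgebra.single w 1 := by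
      rw [AddMonoidAlgebra.single_mul_single, zero_add, mul_one]
    have hscal : (MvPowerSeries.C (σ := Fin 2) (R := Pw)) (AddMonoidAlgebra.single 0 r) =
        algebraMap Sw Bw ((MvPowerSeries.C (σ := Fin 2) (R := ℂ)) r) := by
      rw [MvPowerSeries.algebraMap_apply'', MvPowerSeries.map_C]
      rfl
    have hfs : (AddMonoidAlgebra.single w r : Pw) = AddMonoidAlgebra.single w r := rfl
    rw [hfs, hsingle, map_mul, map_mul, map_mul, hscal, AlgHom.commutes, AlgHom.commutes]
    congr 1
    exact agree_eB hx hy w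

lemma fixed_aB (A : Bw →ₐ[Sw] Bw) : A aB = aB := by
  have : aB = algebraMap Sw Bw (MvPowerSeries.X 0) := by
    rw [MvPowerSeries.algebraMap_apply'', MvPowerSeries.map_X]; rfl
  rw [this, AlgHom.commutes]

lemma fixed_bB (A : Bw →ₐ[Sw] Bw) : A bB = bB := by
  have : bB = algebraMap Sw Bw (MvPowerSeries.X 1) := by
    rw [MvPowerSeries.algebraMap_apply'', MvPowerSeries.map_X]; rfl
  rw [this, AlgHom.commutes]

lemma agree_trunc (hx : φ xB = ψ xB) (hy : φ yB = ψ yB) (n : ℕ) (f : Bw) :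
    φ (trunc n f) = ψ (trunc n f) := by
  rw [trunc, map_sum, map_sum]
  refine Finset.sum_congr rfl fun p _ => ?_
  rw [monomial_eq_C_mul, map_mul, map_mul, map_mul, map_mul, map_pow, map_pow, map_pow, map_pow,
    agree_C hx hy, fixed_aB, fixed_aB, fixed_bB, fixed_bB]

end Agree
end PentagonAux

namespace PentagonAux
open MvPowerSeries

lemma agree_all (φ ψ : Bw →ₐ[Sw] Bw)
    (hφ : @Continuous Bw Bw adicTopBw adicTopBw φ)
    (hψ : @Continuous Bw Bw adicTopBw adicTopBw ψ)
    (hx : φ xB = ψ xB) (hy : φ yB = ψ yB) : φ = ψ := by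
  letI : TopologicalSpace Bw := adicTopBw
  refine AlgHom.ext fun f => ?_
  have key : ∀ k : ℕ, φ f - ψ f ∈ Jw ^ k := by
    intro k
    have hVφ : (fun y => φ f + y) '' (Jw ^ k : Ideal Bw) ∈ @nhds Bw adicTopBw (φ f) :=
      (Ideal.hasBasis_nhds_adic Jw (φ f)).mem_of_mem trivial
    have hVψ : (fun y => ψ f + y) '' (Jw ^ k : Ideal Bw) ∈ @nhds Bw adicTopBw (ψ f) :=
      (Ideal.hasBasis_nhds_adic Jw (ψ f)).mem_of_mem trivial
    have hpre : (φ ⁻¹' ((fun y => φ f + y) '' (Jw ^ k : Ideal Bw))) ∩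
        (ψ ⁻¹' ((fun y => ψ f + y) '' (Jw ^ k : Ideal Bw))) ∈ @nhds Bw adicTopBw f :=
      Filter.inter_mem (hφ.continuousAt.preimage_mem_nhds hVφ)
        (hψ.continuousAt.preimage_mem_nhds hVψ)
    obtain ⟨n, -, hn⟩ := (Ideal.hasBasis_nhds_adic Jw f).mem_iff.mp hpre
    have htf : trunc n f ∈ (fun y => f + y) '' (Jw ^ n : Ideal Bw) := by
      refine ⟨trunc n f - f, ?_, by ring⟩
      have : f - trunc n f ∈ Jw ^ n := lowI_le_pow n (sub_trunc_mem n f)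
      simpa using neg_mem this
    have hmem := hn htf
    obtain ⟨hmφ, hmψ⟩ := hmem
    obtain ⟨u, hu, huEq⟩ := hmφ
    obtain ⟨v, hv, hvEq⟩ := hmψ
    have hφψ : φ (trunc n f) = ψ (trunc n f) := agree_trunc hx hy n f
    have : φ f - ψ f = v - u := by
      have h1 : φ f + u = φ (trunc n f) := huEq
      have h2 : ψ f + v = ψ (trunc n f) := hvEq
      rw [← hφψ] at h2
      linear_combination h1 - h2
    rw [this]
    exact sub_mem hv hu
  have hzero : φ f - ψ f = 0 := by
    apply MvPowerSeries.ext
    intro m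
    rw [map_zero]
    exact mem_lowI.1 (pow_le_lowI (m 0 + m 1 + 1) (key (m 0 + m 1 + 1))) m (by omega)
  exact sub_eq_zero.mp hzero

end PentagonAux

namespace PentagonAux
open MvPowerSeries

lemma constCoeff_one_plus_bB_yB : MvPowerSeries.constantCoeff (σ := Fin 2) (R := Pw) (1 + bB * yB) = 1 := by
  rw [map_add, map_one, map_mul, bB, MvPowerSeries.constantCoeff_X, zero_mul, add_zero]

lemma constCoeff_one_plus_abxy :
    MvPowerSeries.constantCoeff (σ := Fin 2) (R := Pw) (1 + aB * bB * xB * yB) = 1 := by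
  rw [map_add, map_one, map_mul, map_mul, map_mul, aB, MvPowerSeries.constantCoeff_X,
    zero_mul, zero_mul, zero_mul, add_zero]

lemma mul_invBY : (1 + bB * yB) * invBY = 1 :=
  MvPowerSeries.mul_invOfUnit _ 1 (by rw [constCoeff_one_plus_bB_yB]; rfl)

lemma mul_invABXY : (1 + aB * bB * xB * yB) * invABXY = 1 :=
  MvPowerSeries.mul_invOfUnit _ 1 (by rw [constCoeff_one_plus_abxy]; rfl)

end PentagonAux



open PentagonAux

/-- The pentagon identity `A₁ ∘ A₂ = A₂ ∘ A₁₂ ∘ A₁` for the wall-crossing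
transformations of the walls with functions `1+ax`, `1+by`, `1+abxy`: the composition
of the wall-crossing transformations around the intersection point of two transversal
walls becomes the identity after inserting the single new wall in the sum direction
with wall-crossing function `1+abxy`. -/
theorem pentagon_identity (A₁ A₂ A₁₂ : Bw →ₐ[Sw] Bw)
    (hA₁cont : @Continuous Bw Bw adicTopBw adicTopBw A₁)
    (hA₂cont : @Continuous Bw Bw adicTopBw adicTopBw A₂)
    (hA₁₂cont : @Continuous Bw Bw adicTopBw adicTopBw A₁₂)
    (hA₁x : A₁ xB = xB)
    (hA₁y : A₁ yB = (1 + aB * xB) * yB)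
    (hA₂x : A₂ xB = invBY * xB)
    (hA₂y : A₂ yB = yB)
    (hA₁₂x : A₁₂ xB = invABXY * xB)
    (hA₁₂y : A₁₂ yB = (1 + aB * bB * xB * yB) * yB) :
    A₁.comp A₂ = A₂.comp (A₁₂.comp A₁) := by

  -- images of the inverses
  have h1 : (1 + bB * ((1 + aB * xB) * yB)) * A₁ invBY = 1 := by
    have := congrArg A₁ mul_invBY
    rw [map_one, map_mul, map_add, map_one, map_mul, fixed_bB, hA₁y] at this
    exact this
  have h2 : (1 + aB * bB * (invBY * xB) * yB) * A₂ invABXY = 1 := by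
    have := congrArg A₂ mul_invABXY
    rw [map_one, map_mul, map_add, map_one, map_mul, map_mul, map_mul,
      fixed_aB, fixed_bB, hA₂x, hA₂y] at this
    exact this
  -- the composites agree on x
  have hx : (A₁.comp A₂) xB = (A₂.comp (A₁₂.comp A₁)) xB := by
    simp only [AlgHom.comp_apply, map_mul, map_add, map_one, hA₁x, hA₁y, hA₂x, hA₂y,
      hA₁₂x, hA₁₂y, fixed_aB, fixed_bB]
    have hu : IsUnit (1 + bB * ((1 + aB * xB) * yB)) := IsUnit.of_mul_eq_one _ h1
    apply hu.mul_left_cancel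
    linear_combination xB * h1 - xB * h2 - A₂ invABXY * xB * mul_invBY
  -- the composites agree on y
  have hy : (A₁.comp A₂) yB = (A₂.comp (A₁₂.comp A₁)) yB := by
    simp only [AlgHom.comp_apply, map_mul, map_add, map_one, hA₁x, hA₁y, hA₂x, hA₂y,
      hA₁₂x, hA₁₂y, fixed_aB, fixed_bB]
    linear_combination -aB * xB * yB * mul_invBY - aB * invBY * xB * yB * h2
  -- composites are continuous
  have hc1 : @Continuous Bw Bw adicTopBw adicTopBw (A₁.comp A₂) := by
    rw [AlgHom.coe_comp]
    exact @Continuous.comp Bw Bw Bw adicTopBw adicTopBw adicTopBw _ _ hA₁cont hA₂cont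
  have hc2 : @Continuous Bw Bw adicTopBw adicTopBw (A₂.comp (A₁₂.comp A₁)) := by
    rw [AlgHom.coe_comp, AlgHom.coe_comp]
    exact @Continuous.comp Bw Bw Bw adicTopBw adicTopBw adicTopBw _ _ hA₂cont
      (@Continuous.comp Bw Bw Bw adicTopBw adicTopBw adicTopBw _ _ hA₁₂cont hA₁cont)
  exact agree_all _ _ hc1 hc2 hx hy

end
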